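/- Let U be a finite set, γ : U → ι an assignment of each element to a group, and let f : Finset U → ℝ be monotone and submodular with f(∅) ≥ 0. Let a_1, …, a_k ∈ U lie in pairwise distinct groups, and write S_j = {a_1, …, a_j} (S_0 = ∅). Suppose that for every j ∈ {1, …, k} and every e ∈ U whose group γ(e) does not occur among γ(a_1), …, γ(a_{j−1}), one has f(S_{j−1} ∪ {a_j}) ≥ f(S_{j−1} ∪ {e}). Then for every O ⊆ U with |O| ≤ k on which γ is injective, 2·f(S_k) ≥ f(O); that is, the natural greedy algorithm is a 1/2-approximation for monotone submodular maximization subject to group (partition-matroid) constraints. -/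

import Mathlib

/-- The natural greedy algorithm is a `1/2`-approximation for monotone submodular
maximization subject to group (partition-matroid) constraints: if greedy elements
`a 0, …, a (k-1)` lie in pairwise distinct groups and each greedy step picks an
element of maximum marginal value among elements of still-unused groups, then for
every feasible `O` (at most one element per group, `|O| ≤ k`), `2 * f (S k) ≥ f O`,
where `S j = {a 0, …, a (j-1)}`. -/
theorem greedy_group_half_apx
    {U : Type*} [Fintype U] [DecidableEq U] {ι : Type*}
    (γ : U → ι)
    (f : Finset U → ℝ)
    (hmono : ∀ S H : Finset U, S ⊆ H → f S ≤ f H)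
    (hsub : ∀ S H : Finset U, f (S ∪ H) + f (S ∩ H) ≤ f S + f H)
    (hf0 : 0 ≤ f ∅)
    (k : ℕ) (a : Fin k → U)
    (hdist : Function.Injective (γ ∘ a))
    (S : ℕ → Finset U)
    (hS : ∀ j : ℕ, S j = (Finset.univ.filter fun i : Fin k => (i : ℕ) < j).image a)
    (hgreedy : ∀ j : Fin k, ∀ e : U,
      (∀ i : Fin k, (i : ℕ) < (j : ℕ) → γ (a i) ≠ γ e) →
      f (insert e (S j)) ≤ f (insert (a j) (S j)))
    (O : Finset U) (hO : O.card ≤ k) (hOinj : Set.InjOn γ ↑O) :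
    f O ≤ 2 * f (S k) := by
  classical
  -- submodularity in "marginal" form
  have hA : ∀ (Sb H : Finset U) (e : U), Sb ⊆ H →
      f (insert e H) - f H ≤ f (insert e Sb) - f Sb := by
    intro Sb H e hSH
    have h1 := hsub (insert e Sb) H
    have h2 : insert e Sb ∪ H = insert e H := by
      rw [Finset.insert_union, Finset.union_eq_right.mpr hSH]
    have h3 : Sb ⊆ insert e Sb ∩ H :=
      Finset.subset_inter (Finset.subset_insert _ _) hSH
    have h4 := hmono _ _ h3
    rw [h2] at h1
    linarith
  -- union bound by sum of marginals
  have hB : ∀ (T Sb : Finset U),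
      f (Sb ∪ T) ≤ f Sb + ∑ o ∈ T, (f (insert o Sb) - f Sb) := by
    intro T
    induction T using Finset.induction_on with
    | empty => intro Sb; simp
    | insert _ _ ho ih =>
      rename_i o T
      intro Sb
      rw [Finset.sum_insert ho]
      have h2 := hA Sb (Sb ∪ T) o Finset.subset_union_left
      have h3 := ih Sb
      have h1 : Sb ∪ insert o T = insert o (Sb ∪ T) := Finset.union_insert ..
      rw [h1]
      linarith
  have hS0 : S 0 = ∅ := by rw [hS]; simp
  have hSsucc : ∀ j : Fin k, S ((j : ℕ) + 1) = insert (a j) (S (j : ℕ)) := by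
    intro j
    rw [hS, hS]
    have hfe : (Finset.univ.filter fun i : Fin k => (i : ℕ) < (j : ℕ) + 1)
        = insert j (Finset.univ.filter fun i : Fin k => (i : ℕ) < (j : ℕ)) := by
      ext i
      simp [Nat.lt_succ_iff_lt_or_eq, Fin.ext_iff]
      simp only [Fin.le_iff_val_le_val, Fin.lt_iff_val_lt_val]; omega
    rw [hfe, Finset.image_insert]
  have hSsub : ∀ j : ℕ, S j ⊆ S k := by
    intro j
    rw [hS, hS]
    apply Finset.image_subset_image
    intro i hi
    simp only [Finset.mem_filter, Finset.mem_univ, true_and] at hi ⊢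
    exact i.isLt
  rcases Nat.eq_zero_or_pos k with hk0 | hkpos
  · subst hk0
    have : O = ∅ := Finset.card_eq_zero.mp (Nat.le_zero.mp hO)
    subst this
    rw [hS0]
    linarith
  haveI : Nonempty (Fin k) := ⟨⟨0, hkpos⟩⟩
  -- the assignment of elements of O to greedy steps
  set O1 : Finset U := O.filter (fun o => ∃ i : Fin k, γ (a i) = γ o) with hO1def
  have hO1sub : O1 ⊆ O := Finset.filter_subset _ _
  set τ : U → Fin k := fun o =>
    if h : ∃ i : Fin k, γ (a i) = γ o then h.choose else Classical.arbitrary _ with hτdef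
  have hτspec : ∀ o : U, ∀ h : ∃ i : Fin k, γ (a i) = γ o, γ (a (τ o)) = γ o := by
    intro o h
    simp only [hτdef, dif_pos h]
    exact h.choose_spec
  have hτinj : Set.InjOn τ ↑O1 := by
    intro x hx y hy hxy
    simp only [hO1def, Finset.coe_filter, Set.mem_setOf_eq] at hx hy
    have h1 := hτspec x hx.2
    have h2 := hτspec y hy.2
    exact hOinj hx.1 hy.1 (by rw [← h1, ← h2, hxy])
  set I1 : Finset (Fin k) := O1.image τ with hI1def
  have hI1card : I1.card = O1.card := Finset.card_image_of_injOn hτinj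
  set O2 : Finset U := O \ O1 with hO2def
  set T2 : Finset (Fin k) := Finset.univ \ I1 with hT2def
  have hcardle : O2.card ≤ T2.card := by
    have h1 : O2.card = O.card - O1.card := Finset.card_sdiff_of_subset hO1sub
    have h2 : T2.card = k - O1.card := by
      rw [hT2def, Finset.card_sdiff_of_subset (Finset.subset_univ _), hI1card]
      simp
    rw [h1, h2]
    exact Nat.sub_le_sub_right hO _
  obtain ⟨T', hT'sub, hT'card⟩ := Finset.exists_subset_card_eq hcardle
  have hecard : O2.card = T'.card := hT'card.symm
  set e : ↥O2 ≃ ↥T' := Finset.equivOfCardEq hecard with hedef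
  -- σ : O → Fin k
  set σ : {x // x ∈ O} → Fin k := fun o =>
    if h : ∃ i : Fin k, γ (a i) = γ (o : U) then h.choose
    else (e ⟨(o : U), by
      simp only [hO2def, Finset.mem_sdiff, hO1def, Finset.mem_filter]
      exact ⟨o.2, fun hx => h hx.2⟩⟩ : ↥T') with hσdef
  have hσeqτ : ∀ (o : {x // x ∈ O}) (h : ∃ i : Fin k, γ (a i) = γ (o : U)),
      σ o = τ (o : U) := by
    intro o h
    simp only [hσdef, hτdef, dif_pos h]
  have hσT' : ∀ (o : {x // x ∈ O}), ¬(∃ i : Fin k, γ (a i) = γ (o : U)) →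
      (σ o) ∈ T' := by
    intro o h
    simp only [hσdef, dif_neg h]
    exact (e _).2
  -- key property: distinct groups
  have hσgrp : ∀ (o : {x // x ∈ O}) (i : Fin k), i ≠ σ o → γ (a i) ≠ γ (o : U) := by
    intro o i hne
    by_cases h : ∃ j : Fin k, γ (a j) = γ (o : U)
    · intro hcon
      have h1 : γ (a (σ o)) = γ (o : U) := by
        rw [hσeqτ o h]; exact hτspec _ h
      exact hne (hdist (show (γ ∘ a) i = (γ ∘ a) (σ o) by
        simp only [Function.comp_apply]; rw [hcon, h1]))
    · exact fun hcon => h ⟨i, hcon⟩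
  -- injectivity of σ
  have hσinj : Function.Injective σ := by
    intro x y hxy
    by_cases hx : ∃ i : Fin k, γ (a i) = γ (x : U) <;>
      by_cases hy : ∃ i : Fin k, γ (a i) = γ (y : U)
    · have h1 : γ (a (σ x)) = γ (x : U) := by rw [hσeqτ x hx]; exact hτspec _ hx
      have h2 : γ (a (σ y)) = γ (y : U) := by rw [hσeqτ y hy]; exact hτspec _ hy
      exact Subtype.ext (hOinj x.2 y.2 (by rw [← h1, ← h2, hxy]))
    · exfalso
      have hmem : σ x ∈ I1 := by
        rw [hσeqτ x hx, hI1def]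
        exact Finset.mem_image_of_mem τ (Finset.mem_filter.mpr ⟨x.2, hx⟩)
      have hmem2 : σ y ∈ T' := hσT' y hy
      have : σ y ∈ T2 := hT'sub hmem2
      rw [hT2def, Finset.mem_sdiff] at this
      exact this.2 (hxy ▸ hmem)
    · exfalso
      have hmem : σ y ∈ I1 := by
        rw [hσeqτ y hy, hI1def]
        exact Finset.mem_image_of_mem τ (Finset.mem_filter.mpr ⟨y.2, hy⟩)
      have hmem2 : σ x ∈ T' := hσT' x hx
      have : σ x ∈ T2 := hT'sub hmem2
      rw [hT2def, Finset.mem_sdiff] at this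
      exact this.2 (hxy ▸ hmem)
    · have hx' : (x : U) ∈ O2 := by
        simp only [hO2def, Finset.mem_sdiff, hO1def, Finset.mem_filter]
        exact ⟨x.2, fun hc => hx hc.2⟩
      have hy' : (y : U) ∈ O2 := by
        simp only [hO2def, Finset.mem_sdiff, hO1def, Finset.mem_filter]
        exact ⟨y.2, fun hc => hy hc.2⟩
      have hex : σ x = (e ⟨(x : U), hx'⟩ : ↥T') := by simp only [hσdef, dif_neg hx]
      have hey : σ y = (e ⟨(y : U), hy'⟩ : ↥T') := by simp only [hσdef, dif_neg hy]
      have : e ⟨(x : U), hx'⟩ = e ⟨(y : U), hy'⟩ := by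
        apply Subtype.ext
        rw [← hex, ← hey, hxy]
      have h5 := congrArg Subtype.val (e.injective this)
      exact Subtype.ext h5
  -- per-element bound
  set g : Fin k → ℝ := fun j => f (S ((j : ℕ) + 1)) - f (S (j : ℕ)) with hgdef
  have hgnonneg : ∀ j : Fin k, 0 ≤ g j := by
    intro j
    have := hmono (S (j : ℕ)) (S ((j : ℕ) + 1))
      (by rw [hSsucc j]; exact Finset.subset_insert _ _)
    simp only [hgdef]; linarith
  have hperelem : ∀ o : {x // x ∈ O},
      f (insert (o : U) (S k)) - f (S k) ≤ g (σ o) := by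
    intro o
    have h1 : f (insert (o : U) (S k)) - f (S k) ≤
        f (insert (o : U) (S ((σ o : ℕ)))) - f (S ((σ o : ℕ))) :=
      hA _ _ _ (hSsub _)
    have h2 := hgreedy (σ o) (o : U) (fun i hi =>
      hσgrp o i (fun hc => by rw [hc] at hi; exact lt_irrefl _ hi))
    have h3 : f (insert (a (σ o)) (S ((σ o : ℕ)))) = f (S ((σ o : ℕ) + 1)) := by
      rw [hSsucc (σ o)]
    simp only [hgdef]
    linarith
  -- assemble
  have step1 : f O ≤ f (S k ∪ O) := hmono _ _ Finset.subset_union_right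
  have step2 : f (S k ∪ O) ≤ f (S k) + ∑ o ∈ O, (f (insert o (S k)) - f (S k)) :=
    hB O (S k)
  have step3 : ∑ o ∈ O, (f (insert o (S k)) - f (S k))
      = ∑ o ∈ O.attach, (f (insert (o : U) (S k)) - f (S k)) :=
    (Finset.sum_attach O _).symm
  have step4 : ∑ o ∈ O.attach, (f (insert (o : U) (S k)) - f (S k))
      ≤ ∑ o ∈ O.attach, g (σ o) :=
    Finset.sum_le_sum (fun o _ => hperelem o)
  have step5 : ∑ o ∈ O.attach, g (σ o) ≤ ∑ j : Fin k, g j := by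
    rw [← Finset.sum_image (fun x _ y _ h => hσinj h)]
    exact Finset.sum_le_sum_of_subset_of_nonneg (Finset.subset_univ _)
      (fun j _ _ => hgnonneg j)
  have step6 : ∑ j : Fin k, g j = f (S k) - f (S 0) := by
    simp only [hgdef]
    rw [Fin.sum_univ_eq_sum_range (fun j => f (S (j + 1)) - f (S j))]
    exact Finset.sum_range_sub (fun j => f (S j)) k
  rw [hS0] at step6
  linarith
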